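/- Kernel representation for the odd solution of the boundary value problem G'' + 4G = g on [−π/4, π/4]: Let g : [−π/4,π/4] → ℝ be continuous and odd. Define G on [0,π/4] by G(θ) := (1/4) ∫₀^{π/4} ( |sin(2θ − 2θ')| − |sin(2θ + 2θ')| ) g(θ') dθ', and extend G to [−π/4,π/4] as an odd function. Then G is twice continuously differentiable on [−π/4,π/4], satisfies G''(θ) + 4G(θ) = g(θ) for all θ ∈ [−π/4,π/4] and G(±π/4) = 0; moreover G is the unique odd C² function with these properties. -/

import Mathlib

open Set Real intervalIntegral
open scoped Real

noncomputable section

/-- The interval `[-π/4, π/4]`. -/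
def I14 : Set ℝ := Icc (-(π/4)) (π/4)

/-- The kernel formula for the odd solution of `G'' + 4G = g` on `[0,π/4]`, extended to
`[-π/4,π/4]` as an odd function. -/
def Gformula (g : ℝ → ℝ) (θ : ℝ) : ℝ :=
  if 0 ≤ θ then
    (1/4) * ∫ θ' in (0:ℝ)..(π/4),
      (|Real.sin (2*θ - 2*θ')| - |Real.sin (2*θ + 2*θ')|) * g θ'
  else
    -((1/4) * ∫ θ' in (0:ℝ)..(π/4),
      (|Real.sin (2*(-θ) - 2*θ')| - |Real.sin (2*(-θ) + 2*θ')|) * g θ')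

/-- **Kernel representation for the odd solution of `G'' + 4G = g` on `[-π/4,π/4]`
(formula (4.8)).** For continuous odd `g`, the function `Gformula g` is `C²`, solves
`G'' + 4G = g` with `G(±π/4) = 0`, is odd, and is the unique odd `C²` function with these
properties. -/
theorem kernel_representation_G
    (g : ℝ → ℝ) (hg : ContinuousOn g I14)
    (hodd : ∀ θ ∈ I14, g (-θ) = - g θ) :
    ContDiffOn ℝ 2 (Gformula g) I14 ∧
    (∀ θ ∈ I14, iteratedDerivWithin 2 (Gformula g) I14 θ + 4 * Gformula g θ = g θ) ∧
    Gformula g (π/4) = 0 ∧ Gformula g (-(π/4)) = 0 ∧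
    (∀ θ ∈ I14, Gformula g (-θ) = - Gformula g θ) ∧
    (∀ G₂ : ℝ → ℝ,
      (∀ θ ∈ I14, G₂ (-θ) = - G₂ θ) →
      ContDiffOn ℝ 2 G₂ I14 →
      (∀ θ ∈ I14, iteratedDerivWithin 2 G₂ I14 θ + 4 * G₂ θ = g θ) →
      G₂ (π/4) = 0 → G₂ (-(π/4)) = 0 →
      ∀ θ ∈ I14, G₂ θ = Gformula g θ) := by
  have hpi := Real.pi_pos
  have hle : -(π/4) ≤ (π/4) := by linarith
  have hud : UniqueDiffOn ℝ I14 := uniqueDiffOn_Icc (by linarith)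
  set gt : ℝ → ℝ := IccExtend hle (I14.restrict g) with hgt
  have hgtc : Continuous gt := (ContinuousOn.restrict hg).Icc_extend'
  have hgteq : ∀ x ∈ I14, gt x = g x := fun x hx => by
    rw [hgt]; exact IccExtend_of_mem hle (I14.restrict g) hx
  have hcC : Continuous (fun t : ℝ => Real.cos (2*t) * gt t) := by fun_prop
  have hsC : Continuous (fun t : ℝ => Real.sin (2*t) * gt t) := by fun_prop
  set P : ℝ → ℝ := fun θ => ∫ t in (0:ℝ)..θ, Real.cos (2*t) * gt t with hP
  set Q : ℝ → ℝ := fun θ => ∫ t in (0:ℝ)..θ, Real.sin (2*t) * gt t with hQ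
  set A : ℝ := P (π/4) with hA
  set F : ℝ → ℝ := fun θ =>
    (1/2) * (Real.sin (2*θ) * P θ - Real.cos (2*θ) * Q θ) - (A/2) * Real.sin (2*θ) with hF
  have hPd : ∀ θ : ℝ, HasDerivAt P (Real.cos (2*θ) * gt θ) θ := fun θ =>
    (hcC.integral_hasStrictDerivAt 0 θ).hasDerivAt
  have hQd : ∀ θ : ℝ, HasDerivAt Q (Real.sin (2*θ) * gt θ) θ := fun θ =>
    (hsC.integral_hasStrictDerivAt 0 θ).hasDerivAt
  have hsin : ∀ θ : ℝ, HasDerivAt (fun y => Real.sin (2*y)) (2 * Real.cos (2*θ)) θ := by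
    intro θ
    have := ((hasDerivAt_id θ).const_mul (2:ℝ)).sin
    refine this.congr_deriv (Eq.symm ?_); simp only [id_eq]; ring
  have hcos : ∀ θ : ℝ, HasDerivAt (fun y => Real.cos (2*y)) (-(2 * Real.sin (2*θ))) θ := by
    intro θ
    have := ((hasDerivAt_id θ).const_mul (2:ℝ)).cos
    refine this.congr_deriv (Eq.symm ?_); simp only [id_eq]; ring
  set F1 : ℝ → ℝ := fun θ =>
    Real.cos (2*θ) * P θ + Real.sin (2*θ) * Q θ - A * Real.cos (2*θ) with hF1
  have hFd : ∀ θ : ℝ, HasDerivAt F (F1 θ) θ := by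
    intro θ
    have h := ((((hsin θ).mul (hPd θ)).sub ((hcos θ).mul (hQd θ))).const_mul (1/2:ℝ)).sub
      ((hsin θ).const_mul (A/2))
    refine h.congr_deriv (Eq.symm ?_); rw [hF1]; ring
  have hF1d : ∀ θ : ℝ, HasDerivAt F1 (gt θ - 4 * F θ) θ := by
    intro θ
    have h := (((hcos θ).mul (hPd θ)).add ((hsin θ).mul (hQd θ))).sub ((hcos θ).const_mul A)
    refine h.congr_deriv (Eq.symm ?_)
    rw [hF]
    have hpy := Real.sin_sq_add_cos_sq (2*θ)
    linear_combination (-(gt θ)) * hpy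
  have hFdiff : Differentiable ℝ F := fun θ => (hFd θ).differentiableAt
  have hFcont : Continuous F := hFdiff.continuous
  have hFC2 : ContDiff ℝ 2 F := by
    have hdF : deriv F = F1 := funext fun θ => (hFd θ).deriv
    have h1 : ContDiff ℝ 1 F1 := contDiff_one_iff_deriv.mpr
      ⟨fun θ => (hF1d θ).differentiableAt, by
        rw [funext fun θ => (hF1d θ).deriv]
        exact hgtc.sub (continuous_const.mul hFcont)⟩
    have : (2 : WithTop ℕ∞) = 1 + 1 := by norm_num
    rw [this]
    exact contDiff_succ_iff_deriv.mpr
      ⟨hFdiff, by simp, hdF ▸ h1⟩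
  -- kernel identity on [0, π/4]
  have hker : ∀ θ : ℝ, 0 ≤ θ → θ ≤ π/4 → Gformula g θ = F θ := by
    intro θ h0 h4
    have hIsub : Icc (0:ℝ) (π/4) ⊆ I14 := Icc_subset_Icc (by linarith) le_rfl
    rw [Gformula, if_pos h0]
    have e0 : (∫ t in (0:ℝ)..(π/4), (|Real.sin (2*θ - 2*t)| - |Real.sin (2*θ + 2*t)|) * g t)
        = ∫ t in (0:ℝ)..(π/4), (|Real.sin (2*θ - 2*t)| - |Real.sin (2*θ + 2*t)|) * gt t := by
      apply integral_congr
      intro t ht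
      rw [uIcc_of_le (by linarith : (0:ℝ) ≤ π/4)] at ht
      simp only [hgteq t (hIsub ht)]
    rw [e0]
    set f : ℝ → ℝ := fun t => (|Real.sin (2*θ - 2*t)| - |Real.sin (2*θ + 2*t)|) * gt t with hf
    have hfC : Continuous f := by fun_prop
    have hsplit : (∫ t in (0:ℝ)..θ, f t) + (∫ t in θ..(π/4), f t) = ∫ t in (0:ℝ)..(π/4), f t :=
      integral_add_adjacent_intervals (hfC.intervalIntegrable _ _) (hfC.intervalIntegrable _ _)
    have p1 : (∫ t in (0:ℝ)..θ, f t) = (-2*Real.cos (2*θ)) * Q θ := by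
      rw [hQ]
      simp only
      rw [← integral_const_mul]
      apply integral_congr
      intro t ht
      rw [uIcc_of_le h0] at ht
      have h1 : |Real.sin (2*θ - 2*t)| = Real.sin (2*θ - 2*t) :=
        abs_of_nonneg (Real.sin_nonneg_of_nonneg_of_le_pi (by linarith [ht.1, ht.2]) (by linarith [ht.1]))
      have h2 : |Real.sin (2*θ + 2*t)| = Real.sin (2*θ + 2*t) :=
        abs_of_nonneg (Real.sin_nonneg_of_nonneg_of_le_pi (by linarith [ht.1]) (by linarith [ht.2]))
      rw [hf]
      simp only
      rw [h1, h2, Real.sin_sub, Real.sin_add]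
      ring
    have p2 : (∫ t in θ..(π/4), f t) = (-2*Real.sin (2*θ)) * (A - P θ) := by
      have e1 : (∫ t in θ..(π/4), f t)
          = ∫ t in θ..(π/4), (-2*Real.sin (2*θ)) * (Real.cos (2*t) * gt t) := by
        apply integral_congr
        intro t ht
        rw [uIcc_of_le h4] at ht
        have h1 : |Real.sin (2*θ - 2*t)| = -Real.sin (2*θ - 2*t) :=
          abs_of_nonpos (Real.sin_nonpos_of_nonpos_of_neg_pi_le (by linarith [ht.1]) (by linarith [ht.2]))
        have h2 : |Real.sin (2*θ + 2*t)| = Real.sin (2*θ + 2*t) :=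
          abs_of_nonneg (Real.sin_nonneg_of_nonneg_of_le_pi (by linarith [ht.1]) (by linarith [ht.2]))
        rw [hf]
        simp only
        rw [h1, h2, Real.sin_sub, Real.sin_add]
        ring
      rw [e1, integral_const_mul]
      congr 1
      rw [hA, hP]
      simp only
      exact (integral_interval_sub_left (hcC.intervalIntegrable _ _) (hcC.intervalIntegrable _ _)).symm
    rw [← hsplit, p1, p2, hF]
    ring
  have h0mem : (0:ℝ) ∈ I14 := ⟨by linarith, by linarith⟩
  have hquar : (π/4 : ℝ) ∈ I14 := ⟨by linarith, le_rfl⟩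
  have hPeven : ∀ θ ∈ I14, P (-θ) = P θ := by
    intro θ hθ
    have hsubI : uIcc θ 0 ⊆ I14 := (ordConnected_Icc (a := -(π/4)) (b := π/4)).uIcc_subset hθ h0mem
    have key := intervalIntegral.integral_comp_neg (a := θ) (b := 0)
      (f := fun t => Real.cos (2*t) * gt t)
    rw [neg_zero] at key
    have e1 : P (-θ) = ∫ x in θ..(0:ℝ), Real.cos (2*(-x)) * gt (-x) := by
      rw [hP]; simp only; rw [← key]
    have e2 : (∫ x in θ..(0:ℝ), Real.cos (2*(-x)) * gt (-x))
        = ∫ x in θ..(0:ℝ), -(Real.cos (2*x) * gt x) := by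
      apply integral_congr
      intro t ht
      have htI : t ∈ I14 := hsubI ht
      have hnI : -t ∈ I14 := ⟨by linarith [htI.2], by linarith [htI.1]⟩
      simp only
      rw [hgteq _ hnI, hodd t htI, ← hgteq t htI, show (2:ℝ)*(-t) = -(2*t) by ring,
        Real.cos_neg]
      ring
    rw [e1, e2, integral_neg, ← integral_symm]
  have hQodd : ∀ θ ∈ I14, Q (-θ) = - Q θ := by
    intro θ hθ
    have hsubI : uIcc θ 0 ⊆ I14 := (ordConnected_Icc (a := -(π/4)) (b := π/4)).uIcc_subset hθ h0mem
    have key := intervalIntegral.integral_comp_neg (a := θ) (b := 0)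
      (f := fun t => Real.sin (2*t) * gt t)
    rw [neg_zero] at key
    have e1 : Q (-θ) = ∫ x in θ..(0:ℝ), Real.sin (2*(-x)) * gt (-x) := by
      rw [hQ]; simp only; rw [← key]
    have e2 : (∫ x in θ..(0:ℝ), Real.sin (2*(-x)) * gt (-x))
        = ∫ x in θ..(0:ℝ), Real.sin (2*x) * gt x := by
      apply integral_congr
      intro t ht
      have htI : t ∈ I14 := hsubI ht
      have hnI : -t ∈ I14 := ⟨by linarith [htI.2], by linarith [htI.1]⟩
      simp only
      rw [hgteq _ hnI, hodd t htI, ← hgteq t htI, show (2:ℝ)*(-t) = -(2*t) by ring,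
        Real.sin_neg]
      ring
    rw [e1, e2, integral_symm, hQ]
  have hFodd : ∀ θ ∈ I14, F (-θ) = - F θ := by
    intro θ hθ
    rw [hF]; simp only
    rw [show (2:ℝ)*(-θ) = -(2*θ) by ring, Real.sin_neg, Real.cos_neg,
      hPeven θ hθ, hQodd θ hθ]
    ring
  have hGF : ∀ θ ∈ I14, Gformula g θ = F θ := by
    intro θ hθ
    rcases le_or_gt 0 θ with h | h
    · exact hker θ h hθ.2
    · have e1 : Gformula g θ = - Gformula g (-θ) := by
        simp only [Gformula, if_neg (not_le.2 h), if_pos (by linarith : (0:ℝ) ≤ -θ)]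
      rw [e1, hker (-θ) (by linarith) (by linarith [hθ.1]), hFodd θ hθ, neg_neg]
  have hF0 : F 0 = 0 := by
    have hQ0 : Q 0 = 0 := by rw [hQ]; simp only; exact integral_same
    rw [hF]; simp only
    rw [show (2:ℝ)*(0:ℝ) = 0 by ring, Real.sin_zero, hQ0]
    ring
  have hFpi : F (π/4) = 0 := by
    rw [hF]; simp only
    rw [show (2:ℝ)*(π/4) = π/2 by ring, Real.sin_pi_div_two, Real.cos_pi_div_two, ← hA]
    ring
  have hGodd : ∀ θ : ℝ, Gformula g (-θ) = - Gformula g θ := by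
    intro θ
    rcases lt_trichotomy θ 0 with h | h | h
    · simp only [Gformula, if_pos (by linarith : (0:ℝ) ≤ -θ), if_neg (not_le.2 h)]
      ring
    · have h00 : Gformula g 0 = 0 := by rw [hker 0 le_rfl (by linarith), hF0]
      rw [h, neg_zero, h00]; ring
    · have h1 : ¬ (0 ≤ -θ) := not_le.2 (by linarith)
      simp only [Gformula, if_neg h1, if_pos h.le, neg_neg]
  -- second derivative machinery
  have hiter2 : ∀ (f : ℝ → ℝ), ∀ θ ∈ I14,
      iteratedDerivWithin 2 f I14 θ = derivWithin (derivWithin f I14) I14 θ := by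
    intro f θ hθ
    rw [show (2:ℕ) = 1 + 1 from rfl, iteratedDerivWithin_succ]
    have heq : Set.EqOn (iteratedDerivWithin 1 f I14) (derivWithin f I14) I14 := fun x hx => by
      rw [iteratedDerivWithin_one]
    exact derivWithin_congr heq (heq hθ)
  have hdwF : Set.EqOn (derivWithin F I14) F1 I14 := fun x hx =>
    ((hFd x).hasDerivWithinAt).derivWithin (hud x hx)
  have hiterF : ∀ θ ∈ I14, iteratedDerivWithin 2 F I14 θ = gt θ - 4 * F θ := by
    intro θ hθ
    rw [hiter2 F θ hθ, derivWithin_congr hdwF (hdwF hθ)]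
    exact ((hF1d θ).hasDerivWithinAt).derivWithin (hud θ hθ)
  have hGpi : Gformula g (π/4) = 0 := by rw [hker _ (by linarith) le_rfl]; exact hFpi
  refine ⟨?_, ?_, hGpi, ?_, fun θ _ => hGodd θ, ?_⟩
  · exact (hFC2.contDiffOn).congr (fun x hx => hGF x hx)
  · intro θ hθ
    rw [iteratedDerivWithin_congr (fun x hx => hGF x hx) hθ, hiterF θ hθ, hGF θ hθ]
    have := hgteq θ hθ
    linarith
  · rw [hGodd (π/4), hGpi]; ring
  · intro G₂ hodd₂ hC₂ hODE₂ hbp hbm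
    have hone2 : (2 : WithTop ℕ∞) ≠ 0 := by norm_num
    set D : ℝ → ℝ := fun x => G₂ x - F x with hD
    have hDdiffOn : DifferentiableOn ℝ D I14 :=
      (hC₂.sub hFC2.contDiffOn).differentiableOn hone2
    set D1 : ℝ → ℝ := derivWithin D I14 with hD1
    have hG2diff : DifferentiableOn ℝ G₂ I14 := hC₂.differentiableOn hone2
    set dG : ℝ → ℝ := derivWithin G₂ I14 with hdG
    have hdGdiff : DifferentiableOn ℝ dG I14 :=
      (hC₂.derivWithin (m := 1) hud (by norm_num)).differentiableOn one_ne_zero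
    have hD1eqOn : Set.EqOn D1 (fun x => dG x - F1 x) I14 := by
      intro x hx
      rw [hD1, hD]
      simp only
      rw [derivWithin_fun_sub (hG2diff x hx)
        ((hFdiff x).differentiableWithinAt), hdwF hx]
    have hD0 : D 0 = 0 := by
      have h2 : G₂ 0 = 0 := by
        have := hodd₂ 0 h0mem
        rw [neg_zero] at this
        linarith
      rw [hD]; simp only [h2, hF0]; ring
    have hD1hasd : ∀ x ∈ I14, HasDerivWithinAt D1 (-(4 * D x)) I14 x := by
      intro x hx
      have h2 : HasDerivWithinAt dG (derivWithin dG I14 x) I14 x :=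
        (hdGdiff x hx).hasDerivWithinAt
      have h3 : HasDerivWithinAt F1 (gt x - 4*F x) I14 x := (hF1d x).hasDerivWithinAt
      have h5 : HasDerivWithinAt D1 (derivWithin dG I14 x - (gt x - 4*F x)) I14 x :=
        (h2.sub h3).congr hD1eqOn (hD1eqOn hx)
      have h6 : derivWithin dG I14 x = g x - 4 * G₂ x := by
        have h7 := hODE₂ x hx
        rw [hiter2 G₂ x hx] at h7
        rw [hdG]
        linarith
      rw [h6] at h5
      convert h5 using 1
      rw [hD, hgteq x hx]
      simp only
      ring
    have hD1diffOn : DifferentiableOn ℝ D1 I14 := fun x hx =>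
      (hD1hasd x hx).differentiableWithinAt
    set W1 : ℝ → ℝ := fun x => D1 x * Real.sin (2*x) - 2 * D x * Real.cos (2*x) with hW1
    set W2 : ℝ → ℝ := fun x => D1 x * Real.cos (2*x) + 2 * D x * Real.sin (2*x) with hW2
    have hW1d : ∀ x ∈ I14, HasDerivWithinAt W1 0 I14 x := by
      intro x hx
      have hDd : HasDerivWithinAt D (D1 x) I14 x := (hDdiffOn x hx).hasDerivWithinAt
      have h1 := ((hD1hasd x hx).mul ((hsin x).hasDerivWithinAt)).sub
        ((hDd.const_mul 2).mul ((hcos x).hasDerivWithinAt))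
      refine h1.congr_deriv (Eq.symm ?_)
      ring
    have hW2d : ∀ x ∈ I14, HasDerivWithinAt W2 0 I14 x := by
      intro x hx
      have hDd : HasDerivWithinAt D (D1 x) I14 x := (hDdiffOn x hx).hasDerivWithinAt
      have h1 := ((hD1hasd x hx).mul ((hcos x).hasDerivWithinAt)).add
        ((hDd.const_mul 2).mul ((hsin x).hasDerivWithinAt))
      refine h1.congr_deriv (Eq.symm ?_)
      ring
    have hconst : ∀ W : ℝ → ℝ, (∀ x ∈ I14, HasDerivWithinAt W 0 I14 x) →
        ∀ x ∈ I14, ∀ y ∈ I14, W x = W y := by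
      intro W hWd x hx y hy
      have hdiff : DifferentiableOn ℝ W (Icc (-(π/4)) (π/4)) := fun z hz =>
        (hWd z hz).differentiableWithinAt
      have hzero : ∀ z ∈ Ico (-(π/4)) (π/4), derivWithin W (Icc (-(π/4)) (π/4)) z = 0 :=
        fun z hz => (hWd z (Ico_subset_Icc_self hz)).derivWithin
          (hud z (Ico_subset_Icc_self hz))
      have h := constant_of_derivWithin_zero hdiff hzero
      rw [h x hx, h y hy]
    have hW10 : W1 0 = 0 := by
      rw [hW1]; simp only [hD0]
      rw [show (2:ℝ)*(0:ℝ) = 0 by ring, Real.sin_zero]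
      ring
    have hDpi : D (π/4) = 0 := by rw [hD]; simp only [hbp, hFpi]; ring
    have hkey : ∀ x ∈ I14, 2 * D x = D1 0 * Real.sin (2*x) := by
      intro x hx
      have e1 : W1 x = 0 := by rw [hconst W1 hW1d x hx 0 h0mem, hW10]
      have e2 : W2 x = W2 0 := hconst W2 hW2d x hx 0 h0mem
      rw [hW1] at e1
      rw [hW2] at e2
      simp only at e1 e2
      rw [show (2:ℝ)*(0:ℝ) = 0 by ring, Real.sin_zero, Real.cos_zero, hD0] at e2
      have hpy := Real.sin_sq_add_cos_sq (2*x)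
      linear_combination (Real.sin (2*x))*e2 - (Real.cos (2*x))*e1 - 2*D x*hpy
    have hW20 : D1 0 = 0 := by
      have h := hkey (π/4) hquar
      rw [hDpi, show (2:ℝ)*(π/4) = π/2 by ring, Real.sin_pi_div_two] at h
      linarith
    intro θ hθ
    have h := hkey θ hθ
    rw [hW20] at h
    have hDz : D θ = 0 := by linarith [h]
    rw [hD] at hDz
    simp only at hDz
    rw [hGF θ hθ]
    linarith
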